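/- arXiv:1102.2647 — 2 statements merged into one kernel-verified Lean document; each statement's English description precedes it below -/
import Mathlib

section
/- Let W : ℝ^{3×3} → [0,+∞] be Borel measurable, of class C² in a neighborhood of SO(3), frame indifferent (W(RF) = W(F) for all F ∈ ℝ^{3×3} and R ∈ SO(3)), with W(F) ≥ C_W dist²(F, SO(3)) for some C_W > 0 and W = 0 on SO(3). Define Q₃(F) = D²W(I)(F,F) and, for 2×2 matrices G, Q₂(G) = min_{a∈ℝ³} Q₃(Ĝ + a⊗e₃ + e₃⊗a), where Ĝ is G extended by zeros to 3×3. Then Q₃ and Q₂ are positive semi-definite quadratic forms that vanish on antisymmetric matrices and depend only on the symmetric part of their argument, i.e. Q₃(G) = Q₃(sym G) and Q₂(G) = Q₂(sym G); moreover both Q₃ and Q₂ are positive definite on symmetric matrices. -/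
open MeasureTheory Filter Matrix
open scoped Topology BigOperators

noncomputable section

abbrev M3 : Type := Fin 3 → Fin 3 → ℝ
abbrev M2 : Type := Fin 2 → Fin 2 → ℝ

/-- squared Frobenius norm of a (functional) matrix -/
def frobSq {m n : ℕ} (A : Fin m → Fin n → ℝ) : ℝ := ∑ i, ∑ j, (A i j) ^ 2

/-- Frobenius norm -/
def frob {m n : ℕ} (A : Fin m → Fin n → ℝ) : ℝ := Real.sqrt (frobSq A)

/-- the special orthogonal group `SO(n)`, as a set of (functional) matrices -/
def SOn (n : ℕ) : Set (Fin n → Fin n → ℝ) :=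
  {R | Matrix.of R * (Matrix.of R).transpose = 1 ∧ (Matrix.of R).det = 1}

/-- Frobenius distance to `SO(n)` -/
def distSO {n : ℕ} (F : Fin n → Fin n → ℝ) : ℝ :=
  sInf ((fun R => frob (F - R)) '' SOn n)

/-- gradient (Jacobian matrix) of a vector field -/
def grad {n m : ℕ} (y : (Fin n → ℝ) → (Fin m → ℝ)) (x : Fin n → ℝ) :
    Fin m → Fin n → ℝ := fun i j => fderiv ℝ y x (Pi.single j 1) i

/-- gradient of a scalar field -/
def gradS {n : ℕ} (v : (Fin n → ℝ) → ℝ) (x : Fin n → ℝ) : Fin n → ℝ :=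
  fun j => fderiv ℝ v x (Pi.single j 1)

/-- Hessian of a scalar field -/
def hess {n : ℕ} (v : (Fin n → ℝ) → ℝ) (x : Fin n → ℝ) : Fin n → Fin n → ℝ :=
  grad (gradS v) x

/-- gradient of a matrix field -/
def gradM {n m k : ℕ} (A : (Fin n → ℝ) → (Fin m → Fin k → ℝ)) (x : Fin n → ℝ) :
    Fin m → Fin k → Fin n → ℝ := fun i j l => fderiv ℝ A x (Pi.single l 1) i j

/-- L² norm of a scalar field on a set -/
def L2f {n : ℕ} (S : Set (Fin n → ℝ)) (f : (Fin n → ℝ) → ℝ) : ℝ :=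
  Real.sqrt (∫ x in S, (f x) ^ 2)

/-- L² norm of a vector field on a set -/
def L2v {n m : ℕ} (S : Set (Fin n → ℝ)) (y : (Fin n → ℝ) → (Fin m → ℝ)) : ℝ :=
  Real.sqrt (∫ x in S, ∑ i, (y x i) ^ 2)

/-- L² norm of a matrix field on a set -/
def L2m {n m k : ℕ} (S : Set (Fin n → ℝ)) (A : (Fin n → ℝ) → (Fin m → Fin k → ℝ)) : ℝ :=
  Real.sqrt (∫ x in S, frobSq (A x))

/-- Lᵖ norm of a matrix field on a set -/
def Lpm {n m k : ℕ} (p : ℝ) (S : Set (Fin n → ℝ)) (A : (Fin n → ℝ) → (Fin m → Fin k → ℝ)) : ℝ :=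
  (∫ x in S, (frob (A x)) ^ p) ^ (1 / p)

/-- L² norm of the gradient of a matrix field on a set -/
def L2gM {n m k : ℕ} (S : Set (Fin n → ℝ)) (A : (Fin n → ℝ) → (Fin m → Fin k → ℝ)) : ℝ :=
  Real.sqrt (∫ x in S, ∑ i, ∑ j, ∑ l, (gradM A x i j l) ^ 2)

/-- membership in `W^{1,2}(S; ℝ^m)` (differentiable representative with square
integrable function and gradient) -/
def MemW12 {n m : ℕ} (S : Set (Fin n → ℝ)) (y : (Fin n → ℝ) → (Fin m → ℝ)) : Prop :=
  (∀ x ∈ S, DifferentiableAt ℝ y x) ∧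
  Integrable (fun x => ∑ i, (y x i) ^ 2) (volume.restrict S) ∧
  Integrable (fun x => frobSq (grad y x)) (volume.restrict S)

/-- membership in `W^{1,2}(S)` (scalar) -/
def MemW12S {n : ℕ} (S : Set (Fin n → ℝ)) (v : (Fin n → ℝ) → ℝ) : Prop :=
  (∀ x ∈ S, DifferentiableAt ℝ v x) ∧
  Integrable (fun x => (v x) ^ 2) (volume.restrict S) ∧
  Integrable (fun x => ∑ j, (gradS v x j) ^ 2) (volume.restrict S)

/-- membership in `W^{2,2}(S)` (scalar) -/
def MemW22S {n : ℕ} (S : Set (Fin n → ℝ)) (v : (Fin n → ℝ) → ℝ) : Prop :=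
  MemW12S S v ∧ (∀ x ∈ S, DifferentiableAt ℝ (gradS v) x) ∧
  Integrable (fun x => frobSq (hess v x)) (volume.restrict S)

/-- membership in `W^{1,2}(S; ℝ^{m×k})` (matrix fields) -/
def MemW12M {n m k : ℕ} (S : Set (Fin n → ℝ)) (A : (Fin n → ℝ) → (Fin m → Fin k → ℝ)) : Prop :=
  (∀ x ∈ S, DifferentiableAt ℝ A x) ∧
  Integrable (fun x => frobSq (A x)) (volume.restrict S) ∧
  Integrable (fun x => ∑ i, ∑ j, ∑ l, (gradM A x i j l) ^ 2) (volume.restrict S)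

/-- weak convergence in `L²(S)` of a sequence of scalar fields -/
def WeakL2 {n : ℕ} (S : Set (Fin n → ℝ)) (F : ℕ → (Fin n → ℝ) → ℝ)
    (f : (Fin n → ℝ) → ℝ) : Prop :=
  ∀ g : (Fin n → ℝ) → ℝ, Integrable (fun x => (g x) ^ 2) (volume.restrict S) →
    Tendsto (fun k => ∫ x in S, F k x * g x) atTop (𝓝 (∫ x in S, f x * g x))

/-- strong convergence in `L²(S)` of scalar fields -/
def StrongL2 {n : ℕ} (S : Set (Fin n → ℝ)) (F : ℕ → (Fin n → ℝ) → ℝ)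
    (f : (Fin n → ℝ) → ℝ) : Prop :=
  Tendsto (fun k => L2f S (fun x => F k x - f x)) atTop (𝓝 0)

/-- strong convergence in `L²(S)` of matrix fields -/
def StrongL2m {n m k : ℕ} (S : Set (Fin n → ℝ))
    (F : ℕ → (Fin n → ℝ) → (Fin m → Fin k → ℝ))
    (G : (Fin n → ℝ) → (Fin m → Fin k → ℝ)) : Prop :=
  Tendsto (fun j => L2m S (fun x => F j x - G x)) atTop (𝓝 0)

/-- strong convergence in `Lᵖ(S)` of matrix fields -/
def StrongLpm {n m k : ℕ} (p : ℝ) (S : Set (Fin n → ℝ))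
    (F : ℕ → (Fin n → ℝ) → (Fin m → Fin k → ℝ))
    (G : (Fin n → ℝ) → (Fin m → Fin k → ℝ)) : Prop :=
  Tendsto (fun j => Lpm p S (fun x => F j x - G x)) atTop (𝓝 0)

/-- weak convergence in `W^{1,2}(S)` of scalar fields -/
def WeakW12S {n : ℕ} (S : Set (Fin n → ℝ)) (F : ℕ → (Fin n → ℝ) → ℝ)
    (f : (Fin n → ℝ) → ℝ) : Prop :=
  WeakL2 S F f ∧ ∀ j : Fin n, WeakL2 S (fun k x => gradS (F k) x j) (fun x => gradS f x j)

/-- strong convergence in `W^{1,2}(S)` of scalar fields -/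
def StrongW12S {n : ℕ} (S : Set (Fin n → ℝ)) (F : ℕ → (Fin n → ℝ) → ℝ)
    (f : (Fin n → ℝ) → ℝ) : Prop :=
  StrongL2 S F f ∧ ∀ j : Fin n, StrongL2 S (fun k x => gradS (F k) x j) (fun x => gradS f x j)

/-- weak convergence in `W^{1,2}(S; ℝ^m)` of vector fields -/
def WeakW12V {n m : ℕ} (S : Set (Fin n → ℝ)) (F : ℕ → (Fin n → ℝ) → (Fin m → ℝ))
    (f : (Fin n → ℝ) → (Fin m → ℝ)) : Prop :=
  (∀ i, WeakL2 S (fun k x => F k x i) (fun x => f x i)) ∧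
  (∀ i j, WeakL2 S (fun k x => grad (F k) x i j) (fun x => grad f x i j))

/-- matrix algebra helpers -/
def matId (n : ℕ) : Fin n → Fin n → ℝ := fun i j => if i = j then 1 else 0
def symM {n : ℕ} (A : Fin n → Fin n → ℝ) : Fin n → Fin n → ℝ := fun i j => (A i j + A j i) / 2
def transM {n m : ℕ} (A : Fin n → Fin m → ℝ) : Fin m → Fin n → ℝ := fun i j => A j i
def mulM {n : ℕ} (A B : Fin n → Fin n → ℝ) : Fin n → Fin n → ℝ := fun i j => ∑ k, A i k * B k j
def applyM {n : ℕ} (A : Fin n → Fin n → ℝ) (v : Fin n → ℝ) : Fin n → ℝ := fun i => ∑ j, A i j * v j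
def outer {n m : ℕ} (a : Fin n → ℝ) (b : Fin m → ℝ) : Fin n → Fin m → ℝ := fun i j => a i * b j
def e3 : Fin 3 → ℝ := ![0, 0, 1]
def ext23 (G : M2) : M3 := fun i j =>
  if hi : (i : ℕ) < 2 then (if hj : (j : ℕ) < 2 then G ⟨i, hi⟩ ⟨j, hj⟩ else 0) else 0
def det2 (A : M2) : ℝ := A 0 0 * A 1 1 - A 0 1 * A 1 0
def g3 (v : (Fin 2 → ℝ) → ℝ) (x' : Fin 2 → ℝ) : Fin 3 → ℝ := ![gradS v x' 0, gradS v x' 1, 0]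

/-- geometry of the shallow shell -/
def xp (x : Fin 3 → ℝ) : Fin 2 → ℝ := ![x 0, x 1]
def emb (x' : Fin 2 → ℝ) (t : ℝ) : Fin 3 → ℝ := ![x' 0, x' 1, t]
def pd {n : ℕ} (i : Fin n) (θ : (Fin n → ℝ) → ℝ) (x : Fin n → ℝ) : ℝ :=
  fderiv ℝ θ x (Pi.single i 1)
def alphaSh (θ : (Fin 2 → ℝ) → ℝ) (f : ℝ) (x' : Fin 2 → ℝ) : ℝ :=
  1 + f ^ 2 * ((pd 0 θ x') ^ 2 + (pd 1 θ x') ^ 2)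
def a3Sh (θ : (Fin 2 → ℝ) → ℝ) (f : ℝ) (x' : Fin 2 → ℝ) : Fin 3 → ℝ :=
  (Real.sqrt (alphaSh θ f x'))⁻¹ • ![-(f * pd 0 θ x'), -(f * pd 1 θ x'), 1]
def ThetaSh (θ : (Fin 2 → ℝ) → ℝ) (f : ℝ) (x : Fin 3 → ℝ) : Fin 3 → ℝ :=
  ![x 0, x 1, f * θ (xp x)] + x 2 • a3Sh θ f (xp x)
def Ph (h : ℝ) (x : Fin 3 → ℝ) : Fin 3 → ℝ := ![x 0, x 1, 2 * h * x 2]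
def cyl (ω : Set (Fin 2 → ℝ)) (a b : ℝ) : Set (Fin 3 → ℝ) :=
  {x | xp x ∈ ω ∧ x 2 ∈ Set.Ioo a b}
def cylC (ω : Set (Fin 2 → ℝ)) (a b : ℝ) : Set (Fin 3 → ℝ) :=
  {x | xp x ∈ closure ω ∧ x 2 ∈ Set.Icc a b}
def Om (ω : Set (Fin 2 → ℝ)) : Set (Fin 3 → ℝ) := cyl ω (-(2⁻¹ : ℝ)) 2⁻¹
def hatOm (ω : Set (Fin 2 → ℝ)) (θ : (Fin 2 → ℝ) → ℝ) (f hh : ℝ) : Set (Fin 3 → ℝ) :=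
  ThetaSh θ f '' cyl ω (-hh) hh
def Cmat (θ : (Fin 2 → ℝ) → ℝ) (x' : Fin 2 → ℝ) : M3 :=
  ![![0, 0, pd 0 θ x'], ![0, 0, pd 1 θ x'], ![-(pd 0 θ x'), -(pd 1 θ x'), 0]]

/-- a (pragmatic) notion of bounded Lipschitz domain -/
def IsLipschitzDomain {n : ℕ} (U : Set (Fin n → ℝ)) : Prop :=
  IsOpen U ∧ Bornology.IsBounded U ∧ U.Nonempty ∧ IsConnected U

/-- assumptions on the stored energy density -/
structure StoredEnergyHyp (W : M3 → ℝ) : Prop where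
  nonneg : ∀ F, 0 ≤ W F
  smooth : ∃ U : Set M3, IsOpen U ∧ SOn 3 ⊆ U ∧ ContDiffOn ℝ 2 W U
  frame : ∀ (F R : M3), R ∈ SOn 3 → W (mulM R F) = W F
  coer : ∃ Cw > 0, ∀ F, Cw * (distSO F) ^ 2 ≤ W F
  zero : ∀ R ∈ SOn 3, W R = 0

/-- the quadratic form `Q₃(F) = D²W(I)(F,F)` -/
def Q3 (W : M3 → ℝ) (F : M3) : ℝ := iteratedFDeriv ℝ 2 W (matId 3) (fun _ => F)

/-- the relaxed quadratic form `Q₂` -/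
def Q2 (W : M3 → ℝ) (G : M2) : ℝ :=
  sInf (Set.range fun a : Fin 3 → ℝ => Q3 W (ext23 G + outer a e3 + outer e3 a))

/-- the (rescaled) elastic energy `I^h` -/
def Ih (W : M3 → ℝ) (ω : Set (Fin 2 → ℝ)) (θ : (Fin 2 → ℝ) → ℝ) (f hh : ℝ)
    (y : (Fin 3 → ℝ) → Fin 3 → ℝ) : ℝ :=
  (1 / hh) * ∫ x in hatOm ω θ f hh, W (grad y x)

/-- the Marguerre–von Kármán membrane strain -/
def strainMvK (u : (Fin 2 → ℝ) → Fin 2 → ℝ) (v θ : (Fin 2 → ℝ) → ℝ) (x' : Fin 2 → ℝ) : M2 :=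
  grad u x' + transM (grad u x') + outer (gradS v x') (gradS v x')
    + outer (gradS v x') (gradS θ x') + outer (gradS θ x') (gradS v x')

/-- the linearized Marguerre–von Kármán membrane strain -/
def strainL (u : (Fin 2 → ℝ) → Fin 2 → ℝ) (v θ : (Fin 2 → ℝ) → ℝ) (x' : Fin 2 → ℝ) : M2 :=
  grad u x' + transM (grad u x')
    + outer (gradS v x') (gradS θ x') + outer (gradS θ x') (gradS v x')

/-- the Marguerre–von Kármán functional -/
def IMvK (W : M3 → ℝ) (ω : Set (Fin 2 → ℝ)) (θ : (Fin 2 → ℝ) → ℝ)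
    (u : (Fin 2 → ℝ) → Fin 2 → ℝ) (v : (Fin 2 → ℝ) → ℝ) : ℝ :=
  ∫ x' in ω, ((1/2) * Q2 W ((2⁻¹ : ℝ) • strainMvK u v θ x') + (1/24) * Q2 W (hess v x'))

/-- the linearized Marguerre–von Kármán functional -/
def ILMvK (W : M3 → ℝ) (ω : Set (Fin 2 → ℝ)) (θ : (Fin 2 → ℝ) → ℝ)
    (u : (Fin 2 → ℝ) → Fin 2 → ℝ) (v : (Fin 2 → ℝ) → ℝ) : ℝ :=
  ∫ x' in ω, ((1/2) * Q2 W ((2⁻¹ : ℝ) • strainL u v θ x') + (1/24) * Q2 W (hess v x'))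

/-- the averaged in-plane displacement `U^h` -/
def Uavg (θ : (Fin 2 → ℝ) → ℝ) (f hh : ℝ) (y : (Fin 3 → ℝ) → Fin 3 → ℝ)
    (x' : Fin 2 → ℝ) : Fin 2 → ℝ :=
  fun i => ∫ t in Set.Ioo (-(2⁻¹ : ℝ)) 2⁻¹, (y (ThetaSh θ f (Ph hh (emb x' t))) i.castSucc - x' i)

/-- the averaged out-of-plane displacement `V^h` -/
def Vavg (θ : (Fin 2 → ℝ) → ℝ) (f hh : ℝ) (y : (Fin 3 → ℝ) → Fin 3 → ℝ)
    (x' : Fin 2 → ℝ) : ℝ :=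
  ∫ t in Set.Ioo (-(2⁻¹ : ℝ)) 2⁻¹, (y (ThetaSh θ f (Ph hh (emb x' t))) 2 - f * θ x')

/-- the action of the normal force on a rotated configuration -/
def act3 (S : Set (Fin 3 → ℝ)) (g : (Fin 3 → ℝ) → ℝ) (Q : M3) : ℝ :=
  ∫ x in S, g x * ∑ j, Q 2 j * x j

/-- `m^h`, the maximized action of the force over rotations -/
def mMax (S : Set (Fin 3 → ℝ)) (g : (Fin 3 → ℝ) → ℝ) : ℝ := sSup (act3 S g '' SOn 3)

/-- the total energy `J^h` -/
def Jh (W : M3 → ℝ) (ω : Set (Fin 2 → ℝ)) (θ : (Fin 2 → ℝ) → ℝ) (f hh : ℝ)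
    (g : (Fin 3 → ℝ) → ℝ) (y : (Fin 3 → ℝ) → Fin 3 → ℝ) : ℝ :=
  Ih W ω θ f hh y - (1/hh) * (∫ x in hatOm ω θ f hh, g x * y x 2)
    + mMax (hatOm ω θ f hh) g / hh

/-- the relaxation functional `r` -/
def relax (ω : Set (Fin 2 → ℝ)) (θ : (Fin 2 → ℝ) → ℝ) (h E f : ℕ → ℝ)
    (g : ℕ → (Fin 3 → ℝ) → ℝ) (Q : M3) : EReal :=
  sInf {t : EReal | ∃ Qs : ℕ → M3, (∀ n, Qs n ∈ SOn 3) ∧ Tendsto Qs atTop (𝓝 Q) ∧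
    t = Filter.liminf (fun n =>
      (((1/(h n * E n)) * (mMax (hatOm ω θ (f n) (h n)) (g n)
        - act3 (hatOm ω θ (f n) (h n)) (g n) (Qs n))) : EReal)) atTop}

/-- the limit functional `J⁰` -/
def J0E (W : M3 → ℝ) (ω : Set (Fin 2 → ℝ)) (θ : (Fin 2 → ℝ) → ℝ)
    (rfun : M3 → EReal) (f3 : (Fin 3 → ℝ) → ℝ)
    (u : (Fin 2 → ℝ) → Fin 2 → ℝ) (v : (Fin 2 → ℝ) → ℝ) (Rb : M3) : EReal :=
  ((IMvK W ω θ u v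
    - Rb 2 2 * ∫ x' in ω, (∫ t in Set.Ioo (-(2⁻¹ : ℝ)) 2⁻¹, f3 (emb x' t)) * v x' : ℝ) : EReal)
    + rfun Rb

/-- the linearized limit functional `J⁰_L` -/
def J0LE (W : M3 → ℝ) (ω : Set (Fin 2 → ℝ)) (θ : (Fin 2 → ℝ) → ℝ)
    (rfun : M3 → EReal) (f3 : (Fin 3 → ℝ) → ℝ)
    (u : (Fin 2 → ℝ) → Fin 2 → ℝ) (v : (Fin 2 → ℝ) → ℝ) (Rb : M3) : EReal :=
  ((ILMvK W ω θ u v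
    - Rb 2 2 * ∫ x' in ω, (∫ t in Set.Ioo (-(2⁻¹ : ℝ)) 2⁻¹, f3 (emb x' t)) * v x' : ℝ) : EReal)
    + rfun Rb

/-- the geometric rigidity property with constant `C` on a domain `U` -/
def Rigidity (m : ℕ) (C : ℝ) (U : Set (Fin m → ℝ)) : Prop :=
  ∀ v : (Fin m → ℝ) → (Fin m → ℝ), MemW12 U v →
    ∃ R ∈ SOn m, L2m U (fun x => grad v x - R) ≤ C * L2f U (fun x => distSO (grad v x))


namespace St16


lemma frobSq_nonneg {m n : ℕ} (A : Fin m → Fin n → ℝ) : 0 ≤ frobSq A :=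
  Finset.sum_nonneg fun _ _ => Finset.sum_nonneg fun _ _ => sq_nonneg _

lemma frob_nonneg {m n : ℕ} (A : Fin m → Fin n → ℝ) : 0 ≤ frob A := Real.sqrt_nonneg _

lemma frob_sq {m n : ℕ} (A : Fin m → Fin n → ℝ) : frob A ^ 2 = frobSq A :=
  Real.sq_sqrt (frobSq_nonneg A)

/-- Frobenius inner product -/
def ip (A B : M3) : ℝ := ∑ i, ∑ j, A i j * B i j

lemma ip_sq_le (A B : M3) : ip A B ^ 2 ≤ frobSq A * frobSq B := by
  have h := Finset.sum_mul_sq_le_sq_mul_sq (Finset.univ : Finset (Fin 3 × Fin 3))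
      (fun p => A p.1 p.2) (fun p => B p.1 p.2)
  simpa [ip, frobSq, Fintype.sum_prod_type] using h

lemma abs_ip_le (A B : M3) : |ip A B| ≤ frob A * frob B := by
  have h := ip_sq_le A B
  have h2 : Real.sqrt (ip A B ^ 2) ≤ Real.sqrt (frobSq A * frobSq B) := Real.sqrt_le_sqrt h
  rwa [Real.sqrt_sq_eq_abs, Real.sqrt_mul (frobSq_nonneg A)] at h2

lemma frobSq_transmul_le (A : M3) :
    frobSq (fun i j => ∑ k, A k i * A k j) ≤ frobSq A ^ 2 := by
  have h1 : frobSq (fun i j => ∑ k, A k i * A k j)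
      ≤ ∑ i, ∑ j, (∑ k, (A k i)^2) * (∑ k, (A k j)^2) := by
    refine Finset.sum_le_sum fun i _ => Finset.sum_le_sum fun j _ => ?_
    exact Finset.sum_mul_sq_le_sq_mul_sq _ _ _
  have h2 : ∑ i, ∑ j, (∑ k, (A k i)^2) * (∑ k, (A k j)^2)
      = (∑ i, ∑ k, (A k i)^2) * (∑ j, ∑ k, (A k j)^2) := by
    rw [Finset.sum_mul_sum]
  have h3 : (∑ i : Fin 3, ∑ k, (A k i)^2) = frobSq A := by
    rw [frobSq, Finset.sum_comm]
  calc frobSq (fun i j => ∑ k, A k i * A k j) ≤ _ := h1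
    _ = _ := h2
    _ = frobSq A ^ 2 := by rw [h3]; ring

lemma matId_mem_SO3 : matId 3 ∈ SOn 3 := by
  have h : Matrix.of (matId 3) = (1 : Matrix (Fin 3) (Fin 3) ℝ) := by
    ext i j; simp [matId, Matrix.one_apply]
  constructor
  · rw [h]; simp
  · rw [h]; simp

/-- key geometric bound -/
lemma frob_lower (F : M3) (hsym : ∀ i j, F j i = F i j) (t : ℝ)
    (ht : 0 < t) (htb : t * frob F ≤ 1/2) :
    ∀ R ∈ SOn 3, t * frob F / 4 ≤ frob (matId 3 + t • F - R) := by
  intro R hR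
  set nf := frob F with hnf
  set D : M3 := matId 3 + t • F - R with hD
  set dn := frob D with hdn
  have hdn0 : 0 ≤ dn := frob_nonneg D
  have hnf0 : 0 ≤ nf := frob_nonneg F
  have hf2 : frobSq F = nf ^ 2 := (frob_sq F).symm
  have hd2 : frobSq D = dn ^ 2 := (frob_sq D).symm
  -- column orthogonality of R
  have hcol : ∀ i j, (∑ k, R k i * R k j) = (if i = j then (1:ℝ) else 0) := by
    intro i j
    have h2 := mul_eq_one_comm.mp hR.1
    have h3 := congrFun (congrFun h2 i) j
    simpa [Matrix.mul_apply, Matrix.one_apply] using h3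
  set E : M3 := fun i j => R i j - matId 3 i j with hE
  -- claim 1 : ip D F + ip E F = t * frobSq F
  have c1 : ip D F + ip E F = t * frobSq F := by
    simp only [ip, frobSq, ← Finset.sum_add_distrib, Finset.mul_sum]
    refine Finset.sum_congr rfl fun i _ => Finset.sum_congr rfl fun j _ => ?_
    simp only [hD, hE, Pi.add_apply, Pi.sub_apply, Pi.smul_apply, smul_eq_mul]
    ring
  -- the Gram matrix of E
  set P : M3 := fun i j => ∑ k, E k i * E k j with hP
  have hPval : ∀ i j, P i j = 2 * matId 3 i j - R i j - R j i := by
    intro i j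
    have key : ∀ k, E k i * E k j = R k i * R k j - (if k = i then R k j else 0)
        - (if k = j then R k i else 0)
        + (if k = i then (if k = j then (1:ℝ) else 0) else 0) := by
      intro k; simp only [hE, matId]; split_ifs <;> ring
    have h1 : P i j = (∑ k, R k i * R k j) - R i j - R j i + (if i = j then (1:ℝ) else 0) := by
      simp only [hP, key, Finset.sum_add_distrib, Finset.sum_sub_distrib,
        Finset.sum_ite_eq', Finset.mem_univ, if_true]
    rw [h1, hcol i j]
    simp only [matId]
    split_ifs <;> ring
  -- c2 machinery
  set S1 := ∑ i, ∑ j, R i j * F i j with hS1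
  have hswap : (∑ i, ∑ j, R j i * F i j) = S1 := by
    rw [Finset.sum_comm, hS1]
    exact Finset.sum_congr rfl fun i _ => Finset.sum_congr rfl fun j _ => by rw [hsym j i]
  have e1 : ip P F = 2 * ip (matId 3) F - S1 - S1 := by
    simp only [ip, hPval, sub_mul, Finset.sum_sub_distrib, mul_assoc, ← Finset.mul_sum]
    rw [hswap, hS1]
  have e2 : ip E F = S1 - ip (matId 3) F := by
    simp only [ip, hE, sub_mul, Finset.sum_sub_distrib, hS1]
  have c3 : |ip P F| ≤ frobSq E * nf := by
    have h1 := ip_sq_le P F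
    have h2 : frobSq P ≤ frobSq E ^ 2 := frobSq_transmul_le E
    have h3 : (ip P F) ^ 2 ≤ (frobSq E * nf) ^ 2 := by
      calc (ip P F) ^ 2 ≤ frobSq P * frobSq F := h1
        _ ≤ frobSq E ^ 2 * nf ^ 2 := by
            rw [← hf2]
            exact mul_le_mul_of_nonneg_right h2 (frobSq_nonneg F)
        _ = (frobSq E * nf) ^ 2 := by ring
    have hb : 0 ≤ frobSq E * nf := mul_nonneg (frobSq_nonneg E) hnf0
    have := Real.sqrt_le_sqrt h3
    rwa [Real.sqrt_sq_eq_abs, Real.sqrt_sq hb] at this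
  have c4 : frobSq E ≤ 2 * t ^ 2 * frobSq F + 2 * dn ^ 2 := by
    have hpt : ∀ i j, E i j ^ 2 ≤ 2 * (t * F i j) ^ 2 + 2 * (D i j) ^ 2 := by
      intro i j
      have hEij : E i j = t * F i j - D i j := by
        simp only [hE, hD, Pi.sub_apply, Pi.add_apply, Pi.smul_apply, smul_eq_mul]
        ring
      rw [hEij]; nlinarith [sq_nonneg (t * F i j + D i j)]
    calc frobSq E ≤ ∑ i, ∑ j, (2 * (t * F i j) ^ 2 + 2 * (D i j) ^ 2) := by
          exact Finset.sum_le_sum fun i _ => Finset.sum_le_sum fun j _ => hpt i j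
      _ = 2 * t ^ 2 * frobSq F + 2 * frobSq D := by
          have hA : (∑ i : Fin 3, ∑ j : Fin 3, 2 * (t * F i j) ^ 2) = 2 * t ^ 2 * frobSq F := by
            simp only [frobSq, Finset.mul_sum]
            exact Finset.sum_congr rfl fun i _ => Finset.sum_congr rfl fun j _ => by ring
          have hB : (∑ i : Fin 3, ∑ j : Fin 3, 2 * (D i j) ^ 2) = 2 * frobSq D := by
            simp only [frobSq, Finset.mul_sum]
          simp only [Finset.sum_add_distrib]
          rw [hA, hB]
      _ = 2 * t ^ 2 * frobSq F + 2 * dn ^ 2 := by rw [hd2]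
  have c5 : |ip D F| ≤ dn * nf := abs_ip_le D F
  -- combine
  have main : t * nf ^ 2 ≤ dn * nf + (t ^ 2 * nf ^ 2 + dn ^ 2) * nf := by
    have h1 : ip E F = -(ip P F) / 2 := by
      have : 2 * ip E F + ip P F = 0 := by rw [e1, e2]; ring
      linarith
    have h2 : t * frobSq F ≤ |ip D F| + |ip P F| / 2 := by
      rw [← c1, h1]
      have := abs_nonneg (ip P F)
      have := le_abs_self (ip D F)
      have := neg_abs_le (ip P F)
      linarith
    have h3 : t * nf ^ 2 ≤ dn * nf + (frobSq E) * nf / 2 := by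
      rw [← hf2]; linarith
    have h4 : frobSq E * nf ≤ (2 * t ^ 2 * nf ^ 2 + 2 * dn ^ 2) * nf := by
      rw [← hf2] at *
      exact mul_le_mul_of_nonneg_right c4 hnf0
    nlinarith
  rcases eq_or_lt_of_le hnf0 with hnf | hnf
  · have : t * nf / 4 = 0 := by rw [← hnf]; ring
    rw [this]; exact hdn0
  · by_contra hcon
    push_neg at hcon
    have hb1 : dn * nf ≤ (t * nf / 4) * nf :=
      mul_le_mul_of_nonneg_right (le_of_lt hcon) hnf0
    have hdn18 : dn ≤ 1 / 8 := by nlinarith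
    have htnf2 : 0 < t * nf ^ 2 := by positivity
    nlinarith [mul_le_mul_of_nonneg_right hdn18 (mul_nonneg hdn0 hnf0),
      mul_le_mul_of_nonneg_right htb (le_of_lt htnf2)]

lemma distSO_lower (F : M3) (hsym : ∀ i j, F j i = F i j) (t : ℝ)
    (ht : 0 < t) (htb : t * frob F ≤ 1/2) :
    t * frob F / 4 ≤ distSO (matId 3 + t • F) := by
  apply le_csInf
  · exact ⟨_, ⟨matId 3, matId_mem_SO3, rfl⟩⟩
  · rintro b ⟨R, hR, rfl⟩
    exact frob_lower F hsym t ht htb R hR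



section Calc

variable {W : M3 → ℝ} {U : Set M3}
variable (hUo : IsOpen U) (hC2 : ContDiffOn ℝ 2 W U) (hI3U : matId 3 ∈ U)

/-- first derivative -/
local notation "f1" => fderiv ℝ W
/-- second derivative -/
local notation "f2" => fderiv ℝ (fderiv ℝ W)

include hUo hC2

lemma hasF1 : ∀ x ∈ U, HasFDerivAt W (f1 x) x := by
  intro x hx
  exact ((hC2.differentiableOn two_ne_zero).differentiableAt (hUo.mem_nhds hx)).hasFDerivAt

lemma f1C1 : ContDiffOn ℝ 1 (fun y => f1 y) U := hC2.fderiv_of_isOpen hUo le_rfl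

lemma hasF2 : ∀ x ∈ U, HasFDerivAt (fun y => f1 y) (f2 x) x := by
  intro x hx
  exact (((f1C1 hUo hC2).differentiableOn one_ne_zero).differentiableAt
    (hUo.mem_nhds hx)).hasFDerivAt

lemma contF2 : ContinuousOn (fun y => f2 y) U :=
  (f1C1 hUo hC2).continuousOn_fderiv_of_isOpen hUo le_rfl

include hI3U

lemma Hsymm : ∀ v w, f2 (matId 3) v w = f2 (matId 3) w v := by
  intro v w
  have hf : ∀ᶠ y in 𝓝 (matId 3), HasFDerivAt W (f1 y) y := by
    filter_upwards [hUo.mem_nhds hI3U] with y hy using hasF1 hUo hC2 y hy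
  exact second_derivative_symmetric_of_eventually hf (hasF2 hUo hC2 _ hI3U) v w



lemma line_bound (hW0 : W (matId 3) = 0) (hf10 : f1 (matId 3) = 0)
    (hnn : ∀ F, 0 ≤ W F)
    (F : M3) (K : ℝ) (hK : f2 (matId 3) F F < K) :
    ∃ δ > 0, ∀ t ∈ Set.Ioc (0:ℝ) δ, W (matId 3 + t • F) < K * t ^ 2 := by
  classical
  set φ : ℝ → M3 := fun t => matId 3 + t • F with hφ
  have hφc : Continuous φ := by continuity
  have hφ0 : φ 0 = matId 3 := by simp [hφ]
  -- the good set
  set V : Set M3 := U ∩ (fun x => f2 x F F) ⁻¹' Set.Iio K with hV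
  have hVo : IsOpen V := by
    have hcont : ContinuousOn (fun x => f2 x F F) U :=
      ((contF2 hUo hC2).clm_apply continuousOn_const).clm_apply continuousOn_const
    exact hcont.isOpen_inter_preimage hUo isOpen_Iio
  have hI3V : (matId 3) ∈ V := ⟨hI3U, by simpa using hK⟩
  obtain ⟨ε, hε, hball⟩ := Metric.isOpen_iff.mp (hVo.preimage hφc) 0 (by
    simp only [Set.mem_preimage, hφ0]; exact hI3V)
  refine ⟨ε / 2, by positivity, ?_⟩
  have hmem : ∀ s : ℝ, |s| ≤ ε / 2 → φ s ∈ V := by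
    intro s hs
    apply hball
    simp only [Metric.mem_ball, Real.dist_eq, sub_zero]
    linarith
  have hmemU : ∀ s : ℝ, |s| ≤ ε / 2 → φ s ∈ U := fun s hs => (hmem s hs).1
  have hlt : ∀ s : ℝ, |s| ≤ ε / 2 → f2 (φ s) F F < K := fun s hs => (hmem s hs).2
  -- derivatives
  have hdφ : ∀ t : ℝ, HasDerivAt φ F t := by
    intro t
    have h1 : HasDerivAt (fun s : ℝ => s • F) ((1:ℝ) • F) t := (hasDerivAt_id t).smul_const F
    have h2 := h1.const_add (matId 3)
    rw [one_smul] at h2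
    exact h2
  have hder1 : ∀ t : ℝ, φ t ∈ U → HasDerivAt (fun s => W (φ s)) (f1 (φ t) F) t := by
    intro t ht
    exact (hasF1 hUo hC2 _ ht).comp_hasDerivAt t (hdφ t)
  have hder2 : ∀ t : ℝ, φ t ∈ U → HasDerivAt (fun s => f1 (φ s) F) (f2 (φ t) F F) t := by
    intro t ht
    have h1 : HasDerivAt (fun s => f1 (φ s)) (f2 (φ t) F) t :=
      (hasF2 hUo hC2 _ ht).comp_hasDerivAt t (hdφ t)
    have h2 := h1.clm_apply (hasDerivAt_const t F)
    simpa using h2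
  have habs : ∀ s τ : ℝ, s ∈ Set.Icc 0 τ → τ ≤ ε / 2 → 0 < τ → |s| ≤ ε / 2 := by
    intro s τ hs hτ hτ0
    rw [abs_of_nonneg hs.1]; exact le_trans hs.2 hτ
  -- first MVT : bound g1
  have claim1 : ∀ τ ∈ Set.Ioc (0:ℝ) (ε/2), f1 (φ τ) F < K * τ := by
    intro τ hτ
    obtain ⟨hτ0, hτε⟩ := hτ
    have hcont : ContinuousOn (fun s => f1 (φ s) F) (Set.Icc 0 τ) := by
      intro s hs
      exact (hder2 s (hmemU s (habs s τ hs hτε hτ0))).continuousAt.continuousWithinAt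
    obtain ⟨ξ, hξ, hξeq⟩ := exists_hasDerivAt_eq_slope (fun s => f1 (φ s) F)
      (fun s => f2 (φ s) F F) hτ0 hcont (fun x hx => hder2 x
        (hmemU x (habs x τ (Set.mem_Icc_of_Ioo hx) hτε hτ0)))
    have hξa : |ξ| ≤ ε / 2 := habs ξ τ (Set.mem_Icc_of_Ioo hξ) hτε hτ0
    have h0 : f1 (φ 0) F = 0 := by rw [hφ0, hf10]; simp
    rw [h0, sub_zero] at hξeq
    have : f1 (φ τ) F = f2 (φ ξ) F F * τ := by
      field_simp at hξeq
      rw [← hξeq, sub_zero]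
    rw [this]
    exact mul_lt_mul_of_pos_right (hlt ξ hξa) hτ0
  -- second MVT
  intro t ht
  obtain ⟨ht0, htε⟩ := ht
  have hcont : ContinuousOn (fun s => W (φ s)) (Set.Icc 0 t) := by
    intro s hs
    exact (hder1 s (hmemU s (habs s t hs htε ht0))).continuousAt.continuousWithinAt
  obtain ⟨η, hη, hηeq⟩ := exists_hasDerivAt_eq_slope (fun s => W (φ s))
    (fun s => f1 (φ s) F) ht0 hcont (fun x hx => hder1 x
      (hmemU x (habs x t (Set.mem_Icc_of_Ioo hx) htε ht0)))
  have h0 : W (φ 0) = 0 := by rw [hφ0, hW0]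
  rw [h0, sub_zero] at hηeq
  have hWt : W (φ t) = f1 (φ η) F * t := by
    field_simp at hηeq
    rw [← hηeq, sub_zero]
  have hη1 : f1 (φ η) F < K * η := claim1 η ⟨hη.1, le_trans (le_of_lt hη.2) htε⟩
  have hWnn : 0 ≤ W (φ t) := hnn _
  have hfin : W (φ t) < K * η * t := by
    rw [hWt]
    exact mul_lt_mul_of_pos_right hη1 ht0
  nlinarith [hη.1, hη.2]

lemma psd (hW0 : W (matId 3) = 0) (hf10 : f1 (matId 3) = 0)
    (hnn : ∀ F, 0 ≤ W F) (F : M3) : 0 ≤ f2 (matId 3) F F := by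
  by_contra hcon
  push_neg at hcon
  obtain ⟨δ, hδ, hb⟩ := line_bound hUo hC2 hI3U hW0 hf10 hnn F 0 hcon
  have := hb δ ⟨hδ, le_rfl⟩
  have := hnn (matId 3 + δ • F)
  nlinarith

include hUo hC2 hI3U in
lemma posdef (hW0 : W (matId 3) = 0) (hf10 : fderiv ℝ W (matId 3) = 0)
    (hnn : ∀ F, 0 ≤ W F)
    (hcoer : ∃ Cw > 0, ∀ F, Cw * (distSO F) ^ 2 ≤ W F)
    (F : M3) (hsF : ∀ i j, F j i = F i j) (hne : F ≠ 0) :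
    0 < fderiv ℝ (fderiv ℝ W) (matId 3) F F := by
  obtain ⟨Cw, hCw, hco⟩ := hcoer
  have hfs : 0 < frobSq F := by
    have hex : ∃ i j, F i j ≠ 0 := by
      by_contra hc
      push_neg at hc
      exact hne (funext fun i => funext fun j => hc i j)
    obtain ⟨i, j, hij⟩ := hex
    have h1 : F i j ^ 2 ≤ ∑ j', F i j' ^ 2 :=
      Finset.single_le_sum (f := fun j' => F i j' ^ 2) (fun _ _ => sq_nonneg _)
        (Finset.mem_univ j)
    have h2 : (∑ j', F i j' ^ 2) ≤ frobSq F :=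
      Finset.single_le_sum (f := fun i' => ∑ j', F i' j' ^ 2)
        (fun _ _ => Finset.sum_nonneg fun _ _ => sq_nonneg _) (Finset.mem_univ i)
    have h0 : 0 < F i j ^ 2 := by
      have := abs_pos.mpr hij
      nlinarith [sq_abs (F i j)]
    linarith
  set nf := frob F with hnfdef
  have hnf : 0 < nf := Real.sqrt_pos.mpr hfs
  have hf2 : frobSq F = nf ^ 2 := (frob_sq F).symm
  set K := Cw * frobSq F / 32 with hK
  have hKpos : 0 < K := by rw [hK]; positivity
  by_contra hcon
  push_neg at hcon
  obtain ⟨δ, hδ, hb⟩ := line_bound hUo hC2 hI3U hW0 hf10 hnn F K (lt_of_le_of_lt hcon hKpos)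
  set t := min δ (1 / (2 * nf)) with ht
  have ht0 : 0 < t := lt_min hδ (by positivity)
  have htδ : t ≤ δ := min_le_left _ _
  have htb : t * nf ≤ 1 / 2 := by
    have h1 : t ≤ 1 / (2 * nf) := min_le_right _ _
    calc t * nf ≤ (1 / (2 * nf)) * nf := mul_le_mul_of_nonneg_right h1 hnf.le
      _ = 1 / 2 := by field_simp
  have hdist := distSO_lower F hsF t ht0 htb
  have hWb := hb t ⟨ht0, htδ⟩
  have hcoW := hco (matId 3 + t • F)
  have hd0 : 0 ≤ t * nf / 4 := by positivity
  have hsq : (t * nf / 4) ^ 2 ≤ distSO (matId 3 + t • F) ^ 2 := pow_le_pow_left₀ hd0 hdist 2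
  have hfin : Cw * (t * nf / 4) ^ 2 ≤ W (matId 3 + t • F) :=
    le_trans (mul_le_mul_of_nonneg_left hsq (le_of_lt hCw)) hcoW
  rw [hK, hf2] at hWb
  nlinarith [mul_pos (mul_pos hCw (mul_pos ht0 ht0)) (mul_pos hnf hnf)]

end Calc

section Anti

open NormedSpace

def matToFun : Matrix (Fin 3) (Fin 3) ℝ ≃ₗ[ℝ] M3 where
  toFun A := fun i j => A i j
  invFun A := Matrix.of A
  map_add' _ _ := rfl
  map_smul' _ _ := rfl
  left_inv _ := rfl
  right_inv _ := rfl

def m2f (A : Matrix (Fin 3) (Fin 3) ℝ) : M3 := fun i j => A i j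

lemma exp_curve (A' : Matrix (Fin 3) (Fin 3) ℝ) :
    ∃ c : ℝ → Matrix (Fin 3) (Fin 3) ℝ,
      (∀ t, c t = exp (t • A')) ∧
      (∀ t, HasDerivAt (fun s => m2f (c s)) (m2f (c t * A')) t) ∧
      (∀ t, HasDerivAt (fun s => m2f (c s * A')) (m2f (c t * A' * A')) t) := by
  letI : SeminormedRing (Matrix (Fin 3) (Fin 3) ℝ) := Matrix.linftyOpSemiNormedRing
  letI : NormedRing (Matrix (Fin 3) (Fin 3) ℝ) := Matrix.linftyOpNormedRing
  letI : NormedAlgebra ℝ (Matrix (Fin 3) (Fin 3) ℝ) := Matrix.linftyOpNormedAlgebra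
  let e := matToFun.toContinuousLinearEquiv
  have key : ∀ (g : ℝ → Matrix (Fin 3) (Fin 3) ℝ) (d : Matrix (Fin 3) (Fin 3) ℝ) (t : ℝ),
      HasDerivAt g d t → HasDerivAt (fun s => m2f (g s)) (m2f d) t := by
    intro g d t h
    have h2 := e.toContinuousLinearMap.hasFDerivAt.comp_hasDerivAt t h
    exact h2
  refine ⟨fun t => exp (t • A'), fun _ => rfl, fun t => ?_, fun t => ?_⟩
  · exact key _ _ _ (hasDerivAt_exp_smul_const (𝕂 := ℝ) A' t)
  · exact key _ _ _ ((hasDerivAt_exp_smul_const (𝕂 := ℝ) A' t).mul_const A')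

/-- the exponential curve is in SO(3) -/
lemma exp_mem_SO3 (A' : Matrix (Fin 3) (Fin 3) ℝ) (hAt : A'ᵀ = -A')
    (c : ℝ → Matrix (Fin 3) (Fin 3) ℝ) (hc : ∀ t, c t = exp (t • A'))
    (hcont : Continuous fun t => m2f (c t)) :
    ∀ t, m2f (c t) ∈ SOn 3 := by
  letI : SeminormedRing (Matrix (Fin 3) (Fin 3) ℝ) := Matrix.linftyOpSemiNormedRing
  letI : NormedRing (Matrix (Fin 3) (Fin 3) ℝ) := Matrix.linftyOpNormedRing
  letI : NormedAlgebra ℝ (Matrix (Fin 3) (Fin 3) ℝ) := Matrix.linftyOpNormedAlgebra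
  have horth : ∀ t, c t * (c t)ᵀ = 1 := by
    intro t
    have h1 : (c t)ᵀ = exp (-(t • A')) := by
      rw [hc, ← Matrix.exp_transpose, Matrix.transpose_smul, hAt, smul_neg]
    rw [h1, hc, ← Matrix.exp_add_of_commute _ _ (Commute.neg_right (Commute.refl (t • A'))),
      add_neg_cancel]
    exact exp_zero
  have hdet : ∀ t, (c t).det = 1 := by
    intro t
    have hd2 : ∀ s, (c s).det ^ 2 = 1 := by
      intro s
      have := congrArg Matrix.det (horth s)
      rwa [Matrix.det_mul, Matrix.det_transpose, Matrix.det_one, ← sq] at this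
    have hdc : Continuous fun s => (c s).det := by
      have : Continuous fun s => Matrix.of (m2f (c s)) := hcont
      exact this.matrix_det
    have hd0 : (c 0).det = 1 := by
      rw [hc 0, zero_smul, exp_zero, Matrix.det_one]
    have hfact : ((c t).det - 1) * ((c t).det + 1) = 0 := by nlinarith [hd2 t]
    rcases mul_eq_zero.mp hfact with h | h
    · linarith
    · exfalso
      have hm1 : (c t).det = -1 := by linarith
      have hsub : Set.Icc ((c t).det) ((c 0).det) ⊆ Set.range fun s => (c s).det :=
        intermediate_value_univ t 0 hdc
      have h0mem : (0:ℝ) ∈ Set.Icc ((c t).det) ((c 0).det) := by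
        rw [hm1, hd0]; constructor <;> norm_num
      obtain ⟨s, hs⟩ := hsub h0mem
      have h2 := hd2 s
      simp only at hs
      rw [hs] at h2
      norm_num at h2
  intro t
  refine ⟨?_, ?_⟩
  · show Matrix.of (m2f (c t)) * (Matrix.of (m2f (c t)))ᵀ = 1
    have : Matrix.of (m2f (c t)) = c t := rfl
    rw [this]; exact horth t
  · show (Matrix.of (m2f (c t))).det = 1
    have : Matrix.of (m2f (c t)) = c t := rfl
    rw [this]; exact hdet t

end Anti

section AntiMain

variable {W : M3 → ℝ} {U : Set M3}
variable (hUo : IsOpen U) (hC2 : ContDiffOn ℝ 2 W U) (hI3U : matId 3 ∈ U)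

local notation "f1" => fderiv ℝ W
local notation "f2" => fderiv ℝ (fderiv ℝ W)

include hUo hC2

lemma anti (hUS : SOn 3 ⊆ U) (hzero : ∀ R ∈ SOn 3, W R = 0)
    (hf10 : f1 (matId 3) = 0)
    (A : M3) (hA : ∀ i j, A j i = -A i j) : f2 (matId 3) A A = 0 := by
  set A' : Matrix (Fin 3) (Fin 3) ℝ := Matrix.of A with hA'
  have hAt : A'ᵀ = -A' := by
    ext i j
    show A j i = -(A i j)
    exact hA i j
  obtain ⟨c, hc, hd1, hd2c⟩ := exp_curve A'
  have hcont : Continuous fun t => m2f (c t) :=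
    continuous_iff_continuousAt.mpr fun t => (hd1 t).continuousAt
  have hSO := exp_mem_SO3 A' hAt c hc hcont
  have hU : ∀ t, m2f (c t) ∈ U := fun t => hUS (hSO t)
  have hc01 : c 0 = 1 := by rw [hc, zero_smul]; exact NormedSpace.exp_zero
  have hc0 : m2f (c 0) = matId 3 := by
    funext i j
    rw [hc01]
    show (1 : Matrix (Fin 3) (Fin 3) ℝ) i j = _
    simp [Matrix.one_apply, matId]
  have hv0 : m2f (c 0 * A') = A := by rw [hc01, one_mul]; rfl
  have hg1zero : ∀ t, f1 (m2f (c t)) (m2f (c t * A')) = 0 := by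
    intro t
    have h1 : HasDerivAt (fun s => W (m2f (c s))) (f1 (m2f (c t)) (m2f (c t * A'))) t :=
      (hasF1 hUo hC2 _ (hU t)).comp_hasDerivAt t (hd1 t)
    have hgz : (fun s => W (m2f (c s))) = fun _ => (0:ℝ) :=
      funext fun s => hzero _ (hSO s)
    rw [hgz] at h1
    exact h1.unique (hasDerivAt_const t 0)
  have hAder : HasDerivAt (fun s => f1 (m2f (c s))) (f2 (m2f (c 0)) (m2f (c 0 * A'))) 0 :=
    (hasF2 hUo hC2 _ (hU 0)).comp_hasDerivAt 0 (hd1 0)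
  have hg1' := hAder.clm_apply (hd2c 0)
  have hgz1 : (fun s => f1 (m2f (c s)) (m2f (c s * A'))) = fun _ => (0:ℝ) :=
    funext hg1zero
  rw [hgz1] at hg1'
  have huniq := (hasDerivAt_const (0:ℝ) (0:ℝ)).unique hg1'
  rw [hc0, hv0, hf10] at huniq
  simpa using huniq.symm

end AntiMain



variable (H : M3 →L[ℝ] M3 →L[ℝ] ℝ)
variable (hsy : ∀ v w, H v w = H w v)
variable (hpsd : ∀ F, 0 ≤ H F F)
variable (hanti : ∀ A : M3, (∀ i j, A j i = -A i j) → H A A = 0)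
variable (hpd : ∀ F : M3, (∀ i j, F j i = F i j) → F ≠ 0 → 0 < H F F)

/-- expansion of H on sums -/
lemma H_expand (X Y : M3) : H (X + Y) (X + Y) = H X X + H X Y + H Y X + H Y Y := by
  simp only [map_add, ContinuousLinearMap.add_apply]
  ring

include hsy hpsd hanti in
lemma H_cross (S A : M3) (hA : ∀ i j, A j i = -A i j) : H S A = 0 := by
  by_contra hc
  have key : ∀ t : ℝ, 0 ≤ H S S + 2 * t * H S A := by
    intro t
    have h1 := hpsd (S + t • A)
    have h2 : H (S + t • A) (S + t • A) = H S S + 2 * t * H S A := by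
      rw [H_expand]
      have h3 : H (t • A) S = t * H S A := by
        rw [_root_.map_smul]; simp only [ContinuousLinearMap.smul_apply, smul_eq_mul, hsy A S]
      have h4 : H S (t • A) = t * H S A := by
        rw [_root_.map_smul (H S)]; simp
      have h5 : H (t • A) (t • A) = t ^ 2 * H A A := by
        rw [_root_.map_smul]
        simp only [ContinuousLinearMap.smul_apply, smul_eq_mul]
        rw [show (H (t • A)) A = t * H A A by
          rw [_root_.map_smul]; simp]
        ring
      rw [h3, h4, h5, hanti A hA]
      ring
    linarith [h1, h2.symm.le, h2.le]
  have := key (-(H S S + 1) / (2 * H S A))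
  have heq : 2 * (-(H S S + 1) / (2 * H S A)) * H S A = -(H S S + 1) := by
    field_simp
  rw [heq] at this
  linarith

/-- antisymmetric part -/
lemma asym_anti (F : M3) : ∀ i j, (F - symM F) j i = -((F - symM F) i j) := by
  intro i j
  simp only [Pi.sub_apply, symM]
  ring

lemma symM_symm {n : ℕ} (F : Fin n → Fin n → ℝ) : ∀ i j, symM F j i = symM F i j := by
  intro i j; simp only [symM]; ring

include hsy hpsd hanti in
lemma H_symM (F : M3) : H F F = H (symM F) (symM F) := by
  have hdecomp : F = symM F + (F - symM F) := by ring_nf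
  have h1 : H F F = H (symM F) (symM F) + H (symM F) (F - symM F)
      + H (F - symM F) (symM F) + H (F - symM F) (F - symM F) := by
    conv_lhs => rw [hdecomp]
    exact H_expand H _ _
  rw [h1, hanti _ (asym_anti F), H_cross H hsy hpsd hanti _ _ (asym_anti F),
    hsy (F - symM F) (symM F), H_cross H hsy hpsd hanti _ _ (asym_anti F)]
  ring

/-! ### the linear maps for Q2 -/

def Lmap : (Fin 3 → ℝ) →ₗ[ℝ] M3 where
  toFun a := outer a e3 + outer e3 a
  map_add' a b := by funext i j; simp [outer]; ring
  map_smul' c a := by funext i j; simp [outer]; ring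

lemma Lmap_symm (a : Fin 3 → ℝ) : ∀ i j, Lmap a j i = Lmap a i j := by
  intro i j; simp [Lmap, outer]; ring

lemma Lmap_ker (a : Fin 3 → ℝ) (h : Lmap a = 0) : a = 0 := by
  have h02 := congrFun (congrFun h 0) 2
  have h12 := congrFun (congrFun h 1) 2
  have h22 := congrFun (congrFun h 2) 2
  simp only [Lmap, LinearMap.coe_mk, AddHom.coe_mk, Pi.add_apply, outer, e3,
    Pi.zero_apply] at h02 h12 h22
  norm_num [Matrix.cons_val_zero, Matrix.cons_val_one] at h02 h12 h22
  funext i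
  fin_cases i
  · simpa using h02
  · simpa using h12
  · show a 2 = 0; simp at h22; linarith

def ext23L : M2 →ₗ[ℝ] M3 where
  toFun := ext23
  map_add' G G' := by
    funext i j
    by_cases hi : (i : ℕ) < 2 <;> by_cases hj : (j : ℕ) < 2 <;> simp [ext23, hi, hj]
  map_smul' c G := by
    funext i j
    by_cases hi : (i : ℕ) < 2 <;> by_cases hj : (j : ℕ) < 2 <;> simp [ext23, hi, hj]

lemma vec_decomp (v : Fin 3 → ℝ) : v = ∑ i, v i • (Pi.single i (1:ℝ) : Fin 3 → ℝ) := by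
  funext j
  simp only [Finset.sum_apply, Pi.smul_apply, Pi.single_apply, smul_eq_mul, mul_ite,
    mul_one, mul_zero, Finset.sum_ite_eq, Finset.mem_univ, if_true]

variable {H} in
lemma H_apply_L (X : M3) (v : Fin 3 → ℝ) :
    H X (Lmap v) = ∑ i, v i * H X (Lmap (Pi.single i 1)) := by
  conv_lhs => rw [vec_decomp v, map_sum, map_sum (H X)]
  refine Finset.sum_congr rfl fun i _ => ?_
  rw [_root_.map_smul, _root_.map_smul (H X)]
  simp

def Smap : (Fin 3 → ℝ) →ₗ[ℝ] (Fin 3 → ℝ) where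
  toFun a := fun i => H (Lmap a) (Lmap (Pi.single i 1))
  map_add' a b := by
    funext i
    simp [map_add, ContinuousLinearMap.add_apply]
  map_smul' c a := by
    funext i
    show H (Lmap (c • a)) (Lmap (Pi.single i 1)) = (c • fun i => H (Lmap a) (Lmap (Pi.single i 1))) i
    rw [_root_.map_smul, _root_.map_smul]
    simp

include hsy hpd in
lemma Smap_inj : Function.Injective (Smap H) := by
  have hker : ∀ a, Smap H a = 0 → a = 0 := by
    intro a ha
    by_contra hne
    have hLne : Lmap a ≠ 0 := fun h => hne (Lmap_ker a h)
    have hpos : 0 < H (Lmap a) (Lmap a) := hpd _ (Lmap_symm a) hLne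
    have hzero : H (Lmap a) (Lmap a) = 0 := by
      rw [H_apply_L]
      refine Finset.sum_eq_zero fun i _ => ?_
      have := congrFun ha i
      simp only [Smap, LinearMap.coe_mk, AddHom.coe_mk, Pi.zero_apply] at this
      rw [this, mul_zero]
    rw [hzero] at hpos; exact lt_irrefl _ hpos
  intro a b hab
  have := hker (a - b) (by rw [map_sub, hab, sub_self])
  exact sub_eq_zero.mp this

variable {H}

noncomputable def Seq (hsy : ∀ v w, H v w = H w v)
    (hpd : ∀ F : M3, (∀ i j, F j i = F i j) → F ≠ 0 → 0 < H F F) :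
    (Fin 3 → ℝ) ≃ₗ[ℝ] (Fin 3 → ℝ) :=
  LinearEquiv.ofBijective (Smap H)
    ⟨Smap_inj H hsy hpd, LinearMap.injective_iff_surjective.mp (Smap_inj H hsy hpd)⟩

def wmap : M2 →ₗ[ℝ] (Fin 3 → ℝ) where
  toFun G := fun i => -(H (ext23L G) (Lmap (Pi.single i 1)))
  map_add' G G' := by
    funext i
    simp [map_add, ContinuousLinearMap.add_apply]
    ring
  map_smul' c G := by
    funext i
    show -(H (ext23L (c • G)) (Lmap (Pi.single i 1)))
        = (c • fun i => -(H (ext23L G) (Lmap (Pi.single i 1)))) i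
    rw [_root_.map_smul, _root_.map_smul]
    simp

noncomputable def a0 (hsy : ∀ v w, H v w = H w v)
    (hpd : ∀ F : M3, (∀ i j, F j i = F i j) → F ≠ 0 → 0 < H F F) :
    M2 →ₗ[ℝ] (Fin 3 → ℝ) :=
  ((Seq hsy hpd).symm : (Fin 3 → ℝ) →ₗ[ℝ] (Fin 3 → ℝ)).comp (wmap (H := H))


lemma hS_a0 (G : M2) : Smap H (a0 hsy hpd G) = wmap (H := H) G := by
  have := (Seq (H := H) hsy hpd).apply_symm_apply (wmap (H := H) G)
  exact this

lemma stat (G : M2) (v : Fin 3 → ℝ) :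
    H (ext23L G + Lmap (a0 hsy hpd G)) (Lmap v) = 0 := by
  rw [map_add, ContinuousLinearMap.add_apply, H_apply_L, H_apply_L,
    ← Finset.sum_add_distrib]
  refine Finset.sum_eq_zero fun i _ => ?_
  have h1 := congrFun (hS_a0 hsy hpd G) i
  simp only [Smap, wmap, LinearMap.coe_mk, AddHom.coe_mk] at h1
  rw [h1]
  ring

/-- the minimizing matrix -/
noncomputable def NL (hsy : ∀ v w, H v w = H w v)
    (hpd : ∀ F : M3, (∀ i j, F j i = F i j) → F ≠ 0 → 0 < H F F) (G : M2) : M3 :=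
  ext23L G + Lmap (a0 hsy hpd G)


include hpsd in
lemma isLeastQ2 (G : M2) :
    IsLeast (Set.range fun a => H (ext23L G + Lmap a) (ext23L G + Lmap a))
      (H (NL hsy hpd G) (NL hsy hpd G)) := by
  constructor
  · exact ⟨a0 hsy hpd G, rfl⟩
  · rintro x ⟨a, rfl⟩
    simp only
    have hdecomp : ext23L G + Lmap a = NL hsy hpd G + Lmap (a - a0 hsy hpd G) := by
      rw [map_sub, NL]; abel
    rw [hdecomp, H_expand]
    have hstat1 : H (NL hsy hpd G) (Lmap (a - a0 hsy hpd G)) = 0 := stat hsy hpd G _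
    have hstat2 : H (Lmap (a - a0 hsy hpd G)) (NL hsy hpd G) = 0 := by
      rw [hsy]; exact hstat1
    have hq : 0 ≤ H (Lmap (a - a0 hsy hpd G)) (Lmap (a - a0 hsy hpd G)) := hpsd _
    linarith


/-! ### assembling the ten bullets -/

def iota23 : Fin 2 → Fin 3 := fun i => ⟨i.1, by omega⟩

lemma ext23_iota (G : M2) (i j : Fin 2) : ext23 G (iota23 i) (iota23 j) = G i j := by
  simp only [ext23, iota23]
  simp [i.2, j.2]

lemma Lmap_iota (a : Fin 3 → ℝ) (i j : Fin 2) : Lmap a (iota23 i) (iota23 j) = 0 := by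
  have he : ∀ k : Fin 2, e3 (iota23 k) = 0 := by
    intro k
    fin_cases k <;> rfl
  simp [Lmap, outer, he]

lemma ext23_anti (G : M2) (hG : ∀ i j, G j i = -G i j) :
    ∀ i j, ext23 G j i = -(ext23 G i j) := by
  intro i j
  by_cases hi : (i : ℕ) < 2 <;> by_cases hj : (j : ℕ) < 2 <;>
    simp [ext23, hi, hj]
  exact hG ⟨i, hi⟩ ⟨j, hj⟩

lemma ext23_symm (G : M2) (hG : ∀ i j, G j i = G i j) :
    ∀ i j, ext23 G j i = ext23 G i j := by
  intro i j
  by_cases hi : (i : ℕ) < 2 <;> by_cases hj : (j : ℕ) < 2 <;>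
    simp [ext23, hi, hj]
  exact hG ⟨i, hi⟩ ⟨j, hj⟩

lemma symM_shift (G : M2) (a : Fin 3 → ℝ) :
    symM (ext23 G + (outer a e3 + outer e3 a)) = ext23 (symM G) + (outer a e3 + outer e3 a) := by
  funext i j
  by_cases hi : (i : ℕ) < 2 <;> by_cases hj : (j : ℕ) < 2 <;>
    simp [symM, ext23, outer, hi, hj] <;> ring

include hsy hpsd hanti hpd in
theorem main_abstract (W : M3 → ℝ) (hQ3 : ∀ F, Q3 W F = H F F) :
    (∃ B : M3 →ₗ[ℝ] M3 →ₗ[ℝ] ℝ, ∀ F, Q3 W F = B F F) ∧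
    (∀ F, 0 ≤ Q3 W F) ∧
    (∀ F : M3, (∀ i j, F j i = -F i j) → Q3 W F = 0) ∧
    (∀ F, Q3 W F = Q3 W (symM F)) ∧
    (∀ F : M3, (∀ i j, F j i = F i j) → F ≠ 0 → 0 < Q3 W F) ∧
    (∃ B2 : M2 →ₗ[ℝ] M2 →ₗ[ℝ] ℝ, ∀ G, Q2 W G = B2 G G) ∧
    (∀ G, 0 ≤ Q2 W G) ∧
    (∀ G : M2, (∀ i j, G j i = -G i j) → Q2 W G = 0) ∧
    (∀ G, Q2 W G = Q2 W (symM G)) ∧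
    (∀ G : M2, (∀ i j, G j i = G i j) → G ≠ 0 → 0 < Q2 W G) := by
  -- Q2 in terms of NL
  have hfun : ∀ G : M2, (fun a : Fin 3 → ℝ => Q3 W (ext23 G + outer a e3 + outer e3 a))
      = fun a => H (ext23L G + Lmap a) (ext23L G + Lmap a) := by
    intro G
    funext a
    rw [hQ3, add_assoc]
    rfl
  have hQ2val : ∀ G : M2, Q2 W G = H (NL hsy hpd G) (NL hsy hpd G) := by
    intro G
    rw [Q2, hfun G]
    exact (isLeastQ2 hsy hpsd hpd G).csInf_eq
  refine ⟨?_, ?_, ?_, ?_, ?_, ?_, ?_, ?_, ?_, ?_⟩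
  · -- B for Q3
    refine ⟨LinearMap.mk₂ ℝ (fun x y => H x y)
      (fun m n y => by show H (m + n) y = H m y + H n y; simp [map_add, ContinuousLinearMap.add_apply])
      (fun c m y => by show H (c • m) y = c • H m y; rw [_root_.map_smul]; simp)
      (fun m x y => by show H m (x + y) = H m x + H m y; simp)
      (fun c m x => by show H m (c • x) = c • H m x; rw [_root_.map_smul (H m)]), fun F => ?_⟩
    rw [hQ3]
    rfl
  · intro F; rw [hQ3]; exact hpsd F
  · intro F hF; rw [hQ3]; exact hanti F hF
  · intro F
    rw [hQ3, hQ3]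
    exact H_symM H hsy hpsd hanti F
  · intro F hF hne
    rw [hQ3]
    exact hpd F hF hne
  · -- B2 for Q2
    set NLmap : M2 →ₗ[ℝ] M3 := ext23L + Lmap.comp (a0 hsy hpd) with hNLmap
    have hNL : ∀ G, NLmap G = NL hsy hpd G := fun G => rfl
    refine ⟨LinearMap.mk₂ ℝ (fun G G' => H (NLmap G) (NLmap G'))
      (fun m n y => by
        show H (NLmap (m + n)) (NLmap y) = H (NLmap m) (NLmap y) + H (NLmap n) (NLmap y)
        rw [map_add]
        simp [map_add, ContinuousLinearMap.add_apply])
      (fun c m y => by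
        show H (NLmap (c • m)) (NLmap y) = c • H (NLmap m) (NLmap y)
        rw [_root_.map_smul NLmap, _root_.map_smul]
        simp)
      (fun m x y => by
        show H (NLmap m) (NLmap (x + y)) = H (NLmap m) (NLmap x) + H (NLmap m) (NLmap y)
        rw [map_add NLmap, map_add])
      (fun c m x => by
        show H (NLmap m) (NLmap (c • x)) = c • H (NLmap m) (NLmap x)
        rw [_root_.map_smul NLmap, _root_.map_smul (H (NLmap m))]), fun G => ?_⟩
    rw [hQ2val G]
    simp [LinearMap.mk₂_apply, hNL]
  · intro G
    rw [hQ2val G]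
    exact hpsd _
  · intro G hG
    have hle : H (NL hsy hpd G) (NL hsy hpd G) ≤ H (ext23L G + Lmap 0) (ext23L G + Lmap 0) :=
      (isLeastQ2 hsy hpsd hpd G).2 ⟨0, rfl⟩
    rw [map_zero, add_zero] at hle
    have hz : H (ext23L G) (ext23L G) = 0 := hanti _ (ext23_anti G hG)
    have := hpsd (NL hsy hpd G)
    rw [hQ2val G]
    linarith [hle, hz, this]
  · intro G
    have : ∀ a : Fin 3 → ℝ, Q3 W (ext23 G + outer a e3 + outer e3 a)
        = Q3 W (ext23 (symM G) + outer a e3 + outer e3 a) := by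
      intro a
      rw [hQ3, hQ3, H_symM H hsy hpsd hanti, add_assoc, symM_shift, ← add_assoc]
    rw [Q2, Q2]
    congr 1
    ext x
    constructor
    · rintro ⟨a, rfl⟩; exact ⟨a, (this a).symm⟩
    · rintro ⟨a, rfl⟩; exact ⟨a, this a⟩
  · intro G hG hne
    rw [hQ2val G]
    apply hpd
    · intro i j
      show (ext23L G + Lmap (a0 hsy hpd G)) j i = (ext23L G + Lmap (a0 hsy hpd G)) i j
      simp only [Pi.add_apply]
      rw [show (ext23L G : M3) j i = ext23 G j i from rfl,
        show (ext23L G : M3) i j = ext23 G i j from rfl,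
        ext23_symm G hG, Lmap_symm]
    · -- NL G ≠ 0
      intro hzero
      apply hne
      funext i j
      have := congrFun (congrFun hzero (iota23 i)) (iota23 j)
      simp only [NL, Pi.add_apply, Pi.zero_apply] at this
      rw [show ext23L G (iota23 i) (iota23 j) = G i j from ext23_iota G i j,
        Lmap_iota] at this
      simpa using this

end St16

/-- properties of the quadratic forms Q₃ and Q₂. -/
theorem statement16 (W : M3 → ℝ) (hW : StoredEnergyHyp W) :
    -- Q₃ is a quadratic form
    (∃ B : M3 →ₗ[ℝ] M3 →ₗ[ℝ] ℝ, ∀ F, Q3 W F = B F F) ∧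
    -- positive semi-definite
    (∀ F, 0 ≤ Q3 W F) ∧
    -- vanishing on antisymmetric matrices
    (∀ F : M3, (∀ i j, F j i = -F i j) → Q3 W F = 0) ∧
    -- depending only on the symmetric part
    (∀ F, Q3 W F = Q3 W (symM F)) ∧
    -- positive definite on symmetric matrices
    (∀ F : M3, (∀ i j, F j i = F i j) → F ≠ 0 → 0 < Q3 W F) ∧
    -- Q₂ is a quadratic form
    (∃ B2 : M2 →ₗ[ℝ] M2 →ₗ[ℝ] ℝ, ∀ G, Q2 W G = B2 G G) ∧
    (∀ G, 0 ≤ Q2 W G) ∧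
    (∀ G : M2, (∀ i j, G j i = -G i j) → Q2 W G = 0) ∧
    (∀ G, Q2 W G = Q2 W (symM G)) ∧
    (∀ G : M2, (∀ i j, G j i = G i j) → G ≠ 0 → 0 < Q2 W G) := by
  obtain ⟨U, hUo, hUS, hC2⟩ := hW.smooth
  have hI3SO : matId 3 ∈ SOn 3 := St16.matId_mem_SO3
  have hI3U : matId 3 ∈ U := hUS hI3SO
  have hW0 : W (matId 3) = 0 := hW.zero _ hI3SO
  have hloc : IsLocalMin W (matId 3) := Filter.Eventually.of_forall fun x => by
    rw [hW0]; exact hW.nonneg x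
  have hf10 : fderiv ℝ W (matId 3) = 0 := hloc.fderiv_eq_zero
  set H := fderiv ℝ (fderiv ℝ W) (matId 3) with hH
  have hQ3 : ∀ F, Q3 W F = H F F := fun F =>
    iteratedFDeriv_two_apply W (matId 3) (fun _ => F)
  have hsy : ∀ v w, H v w = H w v := St16.Hsymm hUo hC2 hI3U
  have hpsd : ∀ F, 0 ≤ H F F := St16.psd hUo hC2 hI3U hW0 hf10 hW.nonneg
  have hanti : ∀ A : M3, (∀ i j, A j i = -A i j) → H A A = 0 :=
    St16.anti hUo hC2 hUS hW.zero hf10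
  have hpd : ∀ F : M3, (∀ i j, F j i = F i j) → F ≠ 0 → 0 < H F F :=
    St16.posdef hUo hC2 hI3U hW0 hf10 hW.nonneg hW.coer
  exact St16.main_abstract hsy hpsd hanti hpd W hQ3

end
end

section
/- Let μ > 0 and λ ∈ ℝ with 2μ + λ > 0, and let Q₃(F) = 2μ|sym F|² + λ(tr F)² for F ∈ ℝ^{3×3}. Then for every 2×2 matrix G, min_{a∈ℝ³} Q₃(Ĝ + a⊗e₃ + e₃⊗a) = 2μ|sym G|² + (2μλ/(2μ+λ))(tr G)², where Ĝ is G extended by zeros to a 3×3 matrix. -/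
open MeasureTheory Filter Matrix
open scoped Topology BigOperators

noncomputable section

/-- the relaxed quadratic form in the isotropic case. -/
theorem statement17 (μ lam : ℝ) (hμ : 0 < μ) (hlam : 0 < 2 * μ + lam) :
    ∀ G : M2,
      IsLeast (Set.range fun a : Fin 3 → ℝ =>
          2 * μ * frobSq (symM (ext23 G + outer a e3 + outer e3 a))
            + lam * (∑ i, (ext23 G + outer a e3 + outer e3 a) i i) ^ 2)
        (2 * μ * frobSq (symM G) + (2 * μ * lam / (2 * μ + lam)) * (∑ i, G i i) ^ 2) := by
  intro G
  have key : ∀ a : Fin 3 → ℝ,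
      2 * μ * frobSq (symM (ext23 G + outer a e3 + outer e3 a))
        + lam * (∑ i, (ext23 G + outer a e3 + outer e3 a) i i) ^ 2
      = 2 * μ * frobSq (symM G) + 4 * μ * ((a 0)^2 + (a 1)^2) + 8 * μ * (a 2)^2
        + lam * ((G 0 0 + G 1 1) + 2 * a 2) ^ 2 := by
    intro a
    simp [frobSq, symM, ext23, outer, e3, Fin.sum_univ_three, Fin.sum_univ_two, Pi.add_apply]
    ring
  set t := G 0 0 + G 1 1 with ht
  have htr : (∑ i, G i i) = t := by simp [Fin.sum_univ_two, ht]
  constructor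
  · refine ⟨![0, 0, -(lam * t) / (2 * (2 * μ + lam))], ?_⟩
    refine (key ![0, 0, -(lam * t) / (2 * (2 * μ + lam))]).trans ?_
    simp only [Matrix.cons_val_zero, Matrix.cons_val_one, Matrix.head_cons, htr,
      Matrix.cons_val_two, Matrix.tail_cons]
    have h0 : (2 * μ + lam) ≠ 0 := ne_of_gt hlam
    field_simp
    ring
  · rintro x ⟨a, rfl⟩
    refine le_of_le_of_eq ?_ (key a).symm
    rw [htr]
    have h1 : 0 < 2 * μ + lam := hlam
    have h2 : 2 * μ * lam / (2 * μ + lam) * t ^ 2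
        ≤ 4 * μ * ((a 0)^2 + (a 1)^2) + 8 * μ * (a 2)^2 + lam * (t + 2 * a 2) ^ 2 := by
      rw [div_mul_eq_mul_div, div_le_iff₀ h1]
      nlinarith [mul_pos hμ h1, sq_nonneg (a 0), sq_nonneg (a 1),
        mul_nonneg hμ.le (sq_nonneg (2 * (2 * μ + lam) * a 2 + lam * t))]
    linarith
end
end
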